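/- Let r > 2/3, D > 0, μ ∈ ℝ, u₂ ∈ (6/5, 4/3) with r + u₂ − 2 > 0, s < u₂, and q₂ = 1 + √((r + u₂ − 2)/(r + 1/10)). For ε ≥ 0 let J(ε) be the real 3×3 matrix with rows (0, 1, 0), (2(r + 1/10)·q₂·(q₂ − 1)/D, (u₂+μ)/D, −q₂/D), (2ε(1 − u₂)/(u₂ − s), 0, −ε(1 + 2q₂)/(u₂ − s)) (the linearization of the traveling-wave system at the turbulent equilibrium X₂ = (q₂, 0, u₂)). Then there exists ε₀ > 0 such that for all ε ∈ (0, ε₀) the characteristic polynomial of J(ε) has three distinct real roots λ₁ < λ₂ < 0 < λ₃ satisfying λ₂ + λ₃ > 0. (Thus X₂ is hyperbolic and relatively expansive.) -/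
import Mathlib


open Polynomial

noncomputable section

lemma charpoly_my (A B Cc Dd Ee : ℝ) :
    (Matrix.of ![![0,1,0],![A,B,Cc],![Dd,0,Ee]]).charpoly
      = X^3 - C (B+Ee) * X^2 + C (B*Ee - A) * X + C (A*Ee - Cc*Dd) := by
  rw [Matrix.charpoly, Matrix.det_fin_three]
  simp [Matrix.charmatrix_apply, Matrix.diagonal_apply, Matrix.of_apply]
  ring

lemma pert_neg {p0v gv em ε : ℝ} (h : p0v < 0) (hmax : em ≤ -p0v/(|gv|+1))
    (hε : 0 < ε) (hεm : ε < em) : p0v + ε*gv < 0 := by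
  have hpos : (0:ℝ) < |gv| + 1 := by positivity
  have h2 : ε * (|gv|+1) < -p0v := (lt_div_iff₀ hpos).mp (lt_of_lt_of_le hεm hmax)
  nlinarith [mul_le_mul_of_nonneg_left (le_abs_self gv) hε.le]

lemma pert_pos {p0v gv em ε : ℝ} (h : 0 < p0v) (hmax : em ≤ p0v/(|gv|+1))
    (hε : 0 < ε) (hεm : ε < em) : 0 < p0v + ε*gv := by
  have hpos : (0:ℝ) < |gv| + 1 := by positivity
  have h2 : ε * (|gv|+1) < p0v := (lt_div_iff₀ hpos).mp (lt_of_lt_of_le hεm hmax)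
  nlinarith [mul_le_mul_of_nonneg_left (neg_abs_le gv) hε.le]

lemma cubic_factor (P : ℝ[X]) (hm : P.Monic) (hd : P.natDegree = 3)
    {l1 l2 l3 : ℝ} (h12 : l1 ≠ l2) (h13 : l1 ≠ l3) (h23 : l2 ≠ l3)
    (e1 : P.eval l1 = 0) (e2 : P.eval l2 = 0) (e3 : P.eval l3 = 0) :
    P = (X - C l1) * (X - C l2) * (X - C l3) := by
  set Q : ℝ[X] := (X - C l1) * (X - C l2) * (X - C l3) with hQ
  have hQm : Q.Monic := ((monic_X_sub_C l1).mul (monic_X_sub_C l2)).mul (monic_X_sub_C l3)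
  have hQd : Q.natDegree = 3 := by
    rw [hQ, natDegree_mul (by exact mul_ne_zero (X_sub_C_ne_zero l1) (X_sub_C_ne_zero l2))
      (X_sub_C_ne_zero l3), natDegree_mul (X_sub_C_ne_zero l1) (X_sub_C_ne_zero l2)]
    simp
  have hsub : P - Q = 0 := by
    rcases eq_or_ne P Q with h|h
    · simp [h]
    · apply Polynomial.eq_zero_of_natDegree_lt_card_of_eval_eq_zero' _ ({l1, l2, l3} : Finset ℝ)
      · intro i hi
        simp only [Finset.mem_insert, Finset.mem_singleton] at hi
        rcases hi with rfl|rfl|rfl <;>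
          simp [hQ, eval_mul, eval_sub, e1, e2, e3]
      · have hcard : ({l1, l2, l3} : Finset ℝ).card = 3 :=
          Finset.card_eq_three.mpr ⟨l1, l2, l3, h12, h13, h23, rfl⟩
        rw [hcard]
        have hdegP : P.degree = (3 : ℕ) := by rw [Polynomial.degree_eq_natDegree hm.ne_zero, hd]
        have hdegQ : Q.degree = (3 : ℕ) := by rw [Polynomial.degree_eq_natDegree hQm.ne_zero, hQd]
        have hlt : (P - Q).degree < (3:ℕ) := by
          have := Polynomial.degree_sub_lt (hdegP.trans hdegQ.symm) hm.ne_zero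
            (by rw [hm.leadingCoeff, hQm.leadingCoeff])
          rwa [hdegP] at this
        exact (Polynomial.natDegree_lt_iff_degree_lt (sub_ne_zero.mpr h)).mpr hlt
  exact sub_eq_zero.mp hsub

lemma key (b e k a : ℝ) (ha : 0 < a) (hk : 0 < k) :
    ∃ ε₀ > 0, ∀ ε ∈ Set.Ioo (0:ℝ) ε₀,
      ∃ l1 l2 l3 : ℝ, l1 < l2 ∧ l2 < 0 ∧ 0 < l3 ∧ 0 < l2 + l3 ∧
        (X^3 - C (b - ε*e) * X^2 + C (-(b*e*ε) - a) * X + C (-(ε*k)) : ℝ[X])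
          = (X - C l1) * (X - C l2) * (X - C l3) := by
  have hR2 : Real.sqrt (b^2 + 4*a) ^ 2 = b^2 + 4*a := Real.sq_sqrt (by nlinarith)
  set R := Real.sqrt (b^2 + 4*a) with hRdef
  have hRnn : 0 ≤ R := Real.sqrt_nonneg _
  have hbR : b < R := lt_of_pow_lt_pow_left₀ 2 hRnn (by nlinarith)
  have hbR' : -b < R := lt_of_pow_lt_pow_left₀ 2 hRnn (by nlinarith)
  set lp := (b + R)/2 with hlp
  set lm := (b - R)/2 with hlm
  have hlp0 : 0 < lp := by rw [hlp]; linarith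
  have hlm0 : lm < 0 := by rw [hlm]; linarith
  set P0 : ℝ → ℝ := fun x => x^3 - b*x^2 - a*x with hP0
  set g : ℝ → ℝ := fun x => e*x^2 - b*e*x - k with hg
  have hfac0 : ∀ x : ℝ, P0 x = x * (x - lp) * (x - lm) := by
    intro x
    simp only [hP0, hlp, hlm]
    linear_combination (x/4) * hR2
  set η := min (-lm) lp / 2 with hη
  have hη0 : 0 < η := by
    rw [hη]; apply div_pos (lt_min (by linarith) hlp0); norm_num
  have hηlm : η < -lm := by
    rw [hη]; have h := min_le_left (-lm) lp; linarith
  have hηlp : η ≤ lp/2 := by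
    rw [hη]; have := min_le_right (-lm) lp; linarith
  have s1 : P0 (lm-1) < 0 := by
    rw [hfac0]
    exact mul_neg_of_pos_of_neg (mul_pos_of_neg_of_neg (by linarith) (by linarith)) (by linarith)
  have s2 : 0 < P0 (-η) := by
    rw [hfac0]
    exact mul_pos (mul_pos_of_neg_of_neg (by linarith) (by linarith)) (by linarith)
  have s4 : P0 (lp/2) < 0 := by
    rw [hfac0]
    exact mul_neg_of_neg_of_pos (mul_neg_of_pos_of_neg (by linarith) (by linarith)) (by linarith)
  have s5 : 0 < P0 (lp+1) := by
    rw [hfac0]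
    exact mul_pos (mul_pos (by linarith) (by linarith)) (by linarith)
  set E1 := -(P0 (lm-1)) / (|g (lm-1)|+1) with hE1
  set E2 := P0 (-η) / (|g (-η)|+1) with hE2
  set E4 := -(P0 (lp/2)) / (|g (lp/2)|+1) with hE4
  set E5 := P0 (lp+1) / (|g (lp+1)|+1) with hE5
  refine ⟨min (min E1 E2) (min E4 E5), ?_, ?_⟩
  · apply lt_min
    · exact lt_min (by rw [hE1]; exact div_pos (by linarith) (by positivity))
        (by rw [hE2]; exact div_pos s2 (by positivity))
    · exact lt_min (by rw [hE4]; exact div_pos (by linarith) (by positivity))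
        (by rw [hE5]; exact div_pos s5 (by positivity))
  intro ε hε
  obtain ⟨hε0, hεlt⟩ := hε
  have m1 : min (min E1 E2) (min E4 E5) ≤ E1 := le_trans (min_le_left _ _) (min_le_left _ _)
  have m2 : min (min E1 E2) (min E4 E5) ≤ E2 := le_trans (min_le_left _ _) (min_le_right _ _)
  have m4 : min (min E1 E2) (min E4 E5) ≤ E4 := le_trans (min_le_right _ _) (min_le_left _ _)
  have m5 : min (min E1 E2) (min E4 E5) ≤ E5 := le_trans (min_le_right _ _) (min_le_right _ _)
  have b1 : P0 (lm-1) + ε * g (lm-1) < 0 := pert_neg s1 (hE1 ▸ m1) hε0 hεlt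
  have b2 : 0 < P0 (-η) + ε * g (-η) := pert_pos s2 (hE2 ▸ m2) hε0 hεlt
  have b4 : P0 (lp/2) + ε * g (lp/2) < 0 := pert_neg s4 (hE4 ▸ m4) hε0 hεlt
  have b5 : 0 < P0 (lp+1) + ε * g (lp+1) := pert_pos s5 (hE5 ▸ m5) hε0 hεlt
  set P : ℝ[X] := X^3 - C (b - ε*e) * X^2 + C (-(b*e*ε) - a) * X + C (-(ε*k)) with hPdef
  have hev : ∀ x, P.eval x = P0 x + ε * g x := by
    intro x; simp only [hPdef, hP0, hg, eval_add, eval_sub, eval_mul, eval_pow, eval_X, eval_C]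
    ring
  have hcont : Continuous fun x => P.eval x := Polynomial.continuous P
  have hf0 : P.eval 0 < 0 := by
    rw [hev]; simp only [hP0, hg]; nlinarith [mul_pos hε0 hk]
  obtain ⟨l1, hl1mem, hl1⟩ := intermediate_value_Ioo (by linarith : lm - 1 ≤ -η)
    hcont.continuousOn (show (0:ℝ) ∈ Set.Ioo (P.eval (lm-1)) (P.eval (-η)) from by
      rw [hev, hev]; exact ⟨b1, b2⟩)
  obtain ⟨l2, hl2mem, hl2⟩ := intermediate_value_Ioo' (by linarith : -η ≤ (0:ℝ))
    hcont.continuousOn (show (0:ℝ) ∈ Set.Ioo (P.eval 0) (P.eval (-η)) from by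
      refine ⟨hf0, ?_⟩; rw [hev]; exact b2)
  obtain ⟨l3, hl3mem, hl3⟩ := intermediate_value_Ioo (by linarith : lp/2 ≤ lp + 1)
    hcont.continuousOn (show (0:ℝ) ∈ Set.Ioo (P.eval (lp/2)) (P.eval (lp+1)) from by
      rw [hev, hev]; exact ⟨b4, b5⟩)
  obtain ⟨hl1a, hl1b⟩ := hl1mem
  obtain ⟨hl2a, hl2b⟩ := hl2mem
  obtain ⟨hl3a, hl3b⟩ := hl3mem
  have h12 : l1 < l2 := by linarith
  have h20 : l2 < 0 := hl2b
  have h30 : 0 < l3 := by linarith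
  have h23s : 0 < l2 + l3 := by linarith
  refine ⟨l1, l2, l3, h12, h20, h30, h23s, ?_⟩
  have hm : P.Monic := by
    rw [hPdef]; monicity!
  have hdeg : P.natDegree = 3 := by
    rw [hPdef]; compute_degree!
  exact cubic_factor P hm hdeg h12.ne (by linarith : l1 < l3).ne (by linarith : l2 < l3).ne hl1 hl2 hl3


theorem stmt12 (r D μ u2 s : ℝ) (hr : 2/3 < r) (hD : 0 < D)
    (hu2 : u2 ∈ Set.Ioo (6/5 : ℝ) (4/3)) (hru : 0 < r + u2 - 2) (hs : s < u2) :
    let q2 : ℝ := 1 + Real.sqrt ((r + u2 - 2) / (r + 1/10))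
    let J : ℝ → Matrix (Fin 3) (Fin 3) ℝ := fun ε =>
      Matrix.of ![![0, 1, 0],
                  ![2*(r + 1/10)*q2*(q2 - 1)/D, (u2 + μ)/D, -q2/D],
                  ![2*ε*(1 - u2)/(u2 - s), 0, -ε*(1 + 2*q2)/(u2 - s)]]
    ∃ ε₀ > 0, ∀ ε ∈ Set.Ioo 0 ε₀,
      ∃ l1 l2 l3 : ℝ, l1 < l2 ∧ l2 < 0 ∧ 0 < l3 ∧ 0 < l2 + l3 ∧
        (J ε).charpoly = (X - C l1) * (X - C l2) * (X - C l3) := by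
  intro q2 J
  obtain ⟨hu2a, hu2b⟩ := hu2
  have hq2def : q2 = 1 + Real.sqrt ((r + u2 - 2) / (r + 1/10)) := rfl
  have hr10 : (0:ℝ) < r + 1/10 := by linarith
  have hsq : 0 < Real.sqrt ((r + u2 - 2) / (r + 1/10)) :=
    Real.sqrt_pos.mpr (div_pos hru hr10)
  have hq21 : 1 < q2 := by rw [hq2def]; linarith
  have hus : 0 < u2 - s := by linarith
  have ha : 0 < 2*(r + 1/10)*q2*(q2 - 1)/D := by
    apply div_pos ?_ hD
    nlinarith [mul_pos (mul_pos (mul_pos (by norm_num : (0:ℝ) < 2) hr10)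
      (by linarith : (0:ℝ) < q2)) (by linarith : (0:ℝ) < q2 - 1)]
  have he : 0 < (1 + 2*q2)/(u2 - s) := div_pos (by linarith) hus
  have hc : 0 < q2/D := div_pos (by linarith) hD
  have hd : 2*(1 - u2)/(u2 - s) < 0 := div_neg_of_neg_of_pos (by linarith) hus
  have hk : 0 < (2*(r + 1/10)*q2*(q2 - 1)/D) * ((1 + 2*q2)/(u2 - s))
      - (q2/D) * (2*(1 - u2)/(u2 - s)) := by
    have h1 := mul_pos ha he
    have h2 := mul_neg_of_pos_of_neg hc hd
    linarith
  obtain ⟨ε₀, hε₀pos, hK⟩ := key ((u2 + μ)/D) ((1 + 2*q2)/(u2 - s))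
    ((2*(r + 1/10)*q2*(q2 - 1)/D) * ((1 + 2*q2)/(u2 - s))
      - (q2/D) * (2*(1 - u2)/(u2 - s))) (2*(r + 1/10)*q2*(q2 - 1)/D) ha hk
  refine ⟨ε₀, hε₀pos, fun ε hε => ?_⟩
  obtain ⟨l1, l2, l3, h1, h2, h3, h4, hfac⟩ := hK ε hε
  refine ⟨l1, l2, l3, h1, h2, h3, h4, ?_⟩
  have hJ : (J ε).charpoly
      = X^3 - C ((u2 + μ)/D + (-ε*(1 + 2*q2)/(u2 - s))) * X^2
        + C (((u2 + μ)/D) * (-ε*(1 + 2*q2)/(u2 - s)) - 2*(r + 1/10)*q2*(q2 - 1)/D) * X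
        + C ((2*(r + 1/10)*q2*(q2 - 1)/D) * (-ε*(1 + 2*q2)/(u2 - s))
            - (-q2/D) * (2*ε*(1 - u2)/(u2 - s))) :=
    charpoly_my _ _ _ _ _
  rw [hJ,
    show (u2 + μ)/D + (-ε*(1 + 2*q2)/(u2 - s)) = (u2 + μ)/D - ε*((1 + 2*q2)/(u2 - s)) by ring,
    show ((u2 + μ)/D) * (-ε*(1 + 2*q2)/(u2 - s)) - 2*(r + 1/10)*q2*(q2 - 1)/D
      = -(((u2 + μ)/D)*((1 + 2*q2)/(u2 - s))*ε) - 2*(r + 1/10)*q2*(q2 - 1)/D by ring,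
    show (2*(r + 1/10)*q2*(q2 - 1)/D) * (-ε*(1 + 2*q2)/(u2 - s))
        - (-q2/D) * (2*ε*(1 - u2)/(u2 - s))
      = -(ε * ((2*(r + 1/10)*q2*(q2 - 1)/D) * ((1 + 2*q2)/(u2 - s))
          - (q2/D) * (2*(1 - u2)/(u2 - s)))) by ring]
  exact hfac
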